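/- Suppose there exist primes p ≡ 5 (mod 8) and q ≡ 3 (mod 4) such that pq divides N. Then the period τ of the continued fraction expansion of √N is even and Q_{τ/2} ≠ 2 (so Q_{τ/2} is a divisor of 2N containing a nontrivial factor of N). -/

import Mathlib

namespace Stmt16Aux

/-- convergents: ((h m, h (m-1)), (k m, k (m-1))) -/
def conv (a : ℤ → ℤ) : ℕ → (ℤ × ℤ) × (ℤ × ℤ)
  | 0 => ((a 0, 1), (1, 0))
  | n+1 => letI c := conv a n
      ((a (n+1) * c.1.1 + c.1.2, c.1.1), (a (n+1) * c.2.1 + c.2.2, c.2.1))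

/-- word matrix ((A,B),(C,D)) = M_{a i} ⋯ M_{a (i+l-1)} -/
def wmat (a : ℤ → ℤ) : ℕ → ℕ → (ℤ × ℤ) × (ℤ × ℤ)
  | 0, _ => ((1, 0), (0, 1))
  | l+1, i => letI w := wmat a l (i+1)
      ((a i * w.1.1 + w.2.1, a i * w.1.2 + w.2.2), (w.1.1, w.1.2))

end Stmt16Aux

open Stmt16Aux in
set_option maxHeartbeats 1600000 in
theorem stmt_16
    (N : ℕ) (hN : 0 < N) (hNsq : ¬ IsSquare N)
    (a P Q : ℤ → ℤ)
    (hP0 : P 0 = 0) (hQ0 : Q 0 = 1)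
    (ha : ∀ m : ℤ, 0 ≤ m → a m = ⌊((P m : ℝ) + Real.sqrt N) / (Q m : ℝ)⌋)
    (hPrec : ∀ m : ℤ, 0 ≤ m → P (m + 1) = a m * Q m - P m)
    (hQrec : ∀ m : ℤ, 0 ≤ m → Q (m + 1) * Q m = (N : ℤ) - P (m + 1) ^ 2)
    (τ : ℕ) (hτ : 0 < τ)
    (hper : ∀ n : ℤ, 1 ≤ n → a (n + τ) = a n)
    (hmin : ∀ τ' : ℕ, 0 < τ' → (∀ n : ℤ, 1 ≤ n → a (n + τ') = a n) → τ ≤ τ')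
    (hdvd : ∃ r s : ℕ, r.Prime ∧ s.Prime ∧ r % 8 = 5 ∧ s % 4 = 3 ∧ r * s ∣ N)
    :
    Even τ ∧ Q (((τ / 2 : ℕ) : ℤ)) ≠ 2 ∧ Q (((τ / 2 : ℕ) : ℤ)) ∣ 2 * (N : ℤ) := by
  set s : ℝ := Real.sqrt N with hs_def
  -- basic facts about s
  have hN2 : 2 ≤ N := by
    have hN1 : N ≠ 1 := fun h => hNsq (h ▸ ⟨1, rfl⟩)
    omega
  have hs2 : s ^ 2 = N := Real.sq_sqrt (by positivity)
  have hs0 : 0 < s := Real.sqrt_pos.mpr (by positivity)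
  have hs1 : 1 < s := by
    have h2 : (2:ℝ) ≤ (N:ℝ) := by exact_mod_cast hN2
    nlinarith [hs0, hs2, sq_nonneg (s - 1), sq_nonneg (s + 1)]
  have hirr : Irrational s := irrational_sqrt_natCast_iff.mpr hNsq
  -- hypotheses at natural indices
  have hPn : ∀ m : ℕ, P ((m:ℤ)+1) = a m * Q m - P m := fun m => hPrec m m.cast_nonneg
  have hQn : ∀ m : ℕ, Q ((m:ℤ)+1) * Q m = (N:ℤ) - P ((m:ℤ)+1)^2 :=
    fun m => hQrec m m.cast_nonneg
  have han : ∀ m : ℕ, a m = ⌊((P m : ℝ) + s) / (Q m : ℝ)⌋ := fun m => ha m m.cast_nonneg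
  -- Q is never zero
  have hQne : ∀ m : ℕ, Q m ≠ 0 := by
    intro m
    cases m with
    | zero => rw [Nat.cast_zero, hQ0]; exact one_ne_zero
    | succ n =>
      intro h
      apply hNsq
      have h2 := hQn n
      rw [show ((n+1 : ℕ):ℤ) = (n:ℤ)+1 by push_cast; ring] at h
      rw [h, zero_mul] at h2
      refine ⟨(P ((n:ℤ)+1)).natAbs, ?_⟩
      have h3 : ((P ((n:ℤ)+1)).natAbs : ℤ) * ((P ((n:ℤ)+1)).natAbs : ℤ) = (N:ℤ) := by
        rw [Int.natAbs_mul_self']; nlinarith [h2]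
      exact_mod_cast h3.symm
  have hNP : ∀ m : ℕ, (N:ℤ) - P ((m:ℤ)+1)^2 ≠ 0 := by
    intro m
    rw [← hQn m]
    exact mul_ne_zero (by have := hQne (m+1); rwa [show ((m+1:ℕ):ℤ) = (m:ℤ)+1 by push_cast; ring] at this) (hQne m)
  -- the complete quotients
  obtain ⟨x, hx⟩ : ∃ x : ℕ → ℝ, ∀ m : ℕ, x m = ((P m : ℝ) + s) / (Q m : ℝ) :=
    ⟨_, fun _ => rfl⟩
  obtain ⟨y, hy⟩ : ∃ y : ℕ → ℝ, ∀ m : ℕ, y m = ((P m : ℝ) - s) / (Q m : ℝ) :=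
    ⟨_, fun _ => rfl⟩
  have hQR : ∀ m : ℕ, (Q m : ℝ) ≠ 0 := fun m => Int.cast_ne_zero.mpr (hQne m)
  have hx0 : x 0 = s := by rw [hx]; push_cast [hP0, hQ0]; norm_num
  have hy0 : y 0 = -s := by rw [hy]; push_cast [hP0, hQ0]; norm_num
  have hxirr : ∀ m : ℕ, Irrational (x m) := by
    intro m; rw [hx]; exact (hirr.intCast_add (P m)).div_intCast (hQne m)
  have hfl : ∀ m : ℕ, a m = ⌊x m⌋ := by intro m; rw [hx]; exact han m
  have hfr : ∀ m : ℕ, 0 < x m - a m ∧ x m - a m < 1 := by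
    intro m
    have h1 : x m - (a m : ℝ) = Int.fract (x m) := by
      rw [hfl m, Int.fract]
    constructor
    · rw [h1]
      exact Int.fract_pos.mpr (fun hEq => (hxirr m).ne_int ⌊x m⌋ hEq)
    · rw [h1]; exact Int.fract_lt_one _

  have hc1 : ∀ m : ℕ, ((m+1 : ℕ) : ℤ) = (m:ℤ)+1 := by intro m; push_cast; ring
  have hxrec : ∀ m : ℕ, x (m+1) * (x m - a m) = 1 := by
    intro m
    have e1 : x m - (a m : ℝ) = (s - (P ((m:ℤ)+1) : ℝ)) / (Q m : ℝ) := by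
      rw [hx, hPn m]
      push_cast
      rw [eq_div_iff (hQR m), sub_mul, div_mul_cancel₀ _ (hQR m)]
      ring
    rw [e1, hx (m+1), hc1 m, div_mul_div_comm]
    have e2 : ((P ((m:ℤ)+1) : ℝ) + s) * (s - (P ((m:ℤ)+1):ℝ)) = (((N:ℤ) - P ((m:ℤ)+1)^2 : ℤ) : ℝ) := by
      push_cast
      linear_combination hs2
    have e3 : ((Q ((m:ℤ)+1) : ℝ)) * (Q m : ℝ) = (((N:ℤ) - P ((m:ℤ)+1)^2 : ℤ) : ℝ) := by
      rw [← hQn m]; push_cast; ring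
    rw [e2, e3]
    exact div_self (Int.cast_ne_zero.mpr (hNP m))
  have hyrec : ∀ m : ℕ, y (m+1) * (y m - a m) = 1 := by
    intro m
    have e1 : y m - (a m : ℝ) = (-s - (P ((m:ℤ)+1) : ℝ)) / (Q m : ℝ) := by
      rw [hy, hPn m]
      push_cast
      rw [eq_div_iff (hQR m), sub_mul, div_mul_cancel₀ _ (hQR m)]
      ring
    rw [e1, hy (m+1), hc1 m, div_mul_div_comm]
    have e2 : ((P ((m:ℤ)+1) : ℝ) - s) * (-s - (P ((m:ℤ)+1):ℝ)) = (((N:ℤ) - P ((m:ℤ)+1)^2 : ℤ) : ℝ) := by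
      push_cast
      linear_combination hs2
    have e3 : ((Q ((m:ℤ)+1) : ℝ)) * (Q m : ℝ) = (((N:ℤ) - P ((m:ℤ)+1)^2 : ℤ) : ℝ) := by
      rw [← hQn m]; push_cast; ring
    rw [e2, e3]
    exact div_self (Int.cast_ne_zero.mpr (hNP m))
  have hx1 : ∀ m : ℕ, 1 < x (m+1) := by
    intro m
    have h := hxrec m
    have h2 := hfr m
    nlinarith [h, h2.1, h2.2]
  have hxpos : ∀ m : ℕ, 0 < x m := by
    intro m; cases m with
    | zero => rw [hx0]; exact hs0
    | succ n => linarith [hx1 n]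
  have ha1 : ∀ m : ℕ, 1 ≤ a m := by
    intro m
    rw [hfl m]
    cases m with
    | zero => rw [hx0]; exact Int.le_floor.mpr (by push_cast; linarith)
    | succ n => exact Int.le_floor.mpr (by push_cast; linarith [hx1 n])
  have haR : ∀ m : ℕ, (1:ℝ) ≤ (a m : ℝ) := fun m => by exact_mod_cast ha1 m
  have hyneg : ∀ m : ℕ, y m < 0 := by
    intro m
    induction m with
    | zero => rw [hy0]; linarith
    | succ n ih => nlinarith [hyrec n, haR n, ih]
  have hyred : ∀ m : ℕ, -1 < y (m+1) := by
    intro m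
    have h := hyrec m
    have h2 : y m - a m < -1 := by nlinarith [hyneg m, haR m]
    nlinarith [h, h2]
  have hQposZ : ∀ m : ℕ, 0 < Q m := by
    intro m; cases m with
    | zero => rw [Nat.cast_zero, hQ0]; norm_num
    | succ n =>
      have hdiff : x (n+1) - y (n+1) = 2 * s / (Q ((n+1:ℕ)) : ℝ) := by
        rw [hx, hy]; ring
      have h1 : 0 < x (n+1) - y (n+1) := by linarith [hx1 n, hyneg (n+1)]
      rw [hdiff] at h1
      have h3 : (0:ℝ) < (Q ((n+1:ℕ)):ℝ) := by
        rcases lt_trichotomy ((Q ((n+1:ℕ)):ℝ)) 0 with h|h|h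
        · exfalso; have := div_neg_of_pos_of_neg (by linarith : (0:ℝ) < 2*s) h; linarith
        · exact absurd h (hQR (n+1))
        · exact h
      exact_mod_cast h3
  have hPsq : ∀ m : ℕ, P m ^ 2 < (N:ℤ) := by
    intro m; cases m with
    | zero =>
      rw [Nat.cast_zero, hP0]
      simpa using (by exact_mod_cast hN : (0:ℤ) < (N:ℤ))
    | succ n =>
      have hprod : x (n+1) * y (n+1) = ((P ((n+1:ℕ)) : ℝ)^2 - (N:ℝ)) / ((Q ((n+1:ℕ)) : ℝ))^2 := by
        rw [hx, hy, div_mul_div_comm, ← sq]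
        congr 1
        linear_combination (-1:ℝ) * hs2
      have hneg : x (n+1) * y (n+1) < 0 := mul_neg_of_pos_of_neg (hxpos (n+1)) (hyneg (n+1))
      rw [hprod] at hneg
      have hq2 : (0:ℝ) < ((Q ((n+1:ℕ)):ℝ))^2 := by
        have := hQR (n+1); positivity
      have h4 : (P ((n+1:ℕ)) : ℝ)^2 - (N:ℝ) < 0 := by
        by_contra hcon
        push_neg at hcon
        have := div_nonneg hcon (le_of_lt hq2)
        linarith
      have h5 : ((P ((n+1:ℕ)))^2 : ℝ) < ((N:ℤ):ℝ) := by push_cast; push_cast at h4; linarith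
      exact_mod_cast h5
  have hNZ1 : (1:ℤ) ≤ (N:ℤ) := by exact_mod_cast hN
  have hQleN : ∀ m : ℕ, Q m ≤ (N:ℤ) := by
    intro m; cases m with
    | zero => rw [Nat.cast_zero, hQ0]; exact hNZ1
    | succ n =>
      have h := hQn n
      have h1 : 0 < Q ((n:ℤ)+1) := by have := hQposZ (n+1); rwa [hc1 n] at this
      have h2 : 0 < Q (n:ℤ) := hQposZ n
      rw [hc1 n]
      nlinarith [sq_nonneg (P ((n:ℤ)+1)), mul_nonneg (by linarith : (0:ℤ) ≤ Q ((n:ℤ)+1)) (by linarith : (0:ℤ) ≤ Q (n:ℤ) - 1)]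
  have hPbd : ∀ m : ℕ, -(N:ℤ) ≤ P m ∧ P m ≤ (N:ℤ) := by
    intro m
    constructor
    · nlinarith [hPsq m, hNZ1, sq_nonneg (P m + N)]
    · nlinarith [hPsq m, hNZ1, sq_nonneg (P m - N)]

  -- alternate Q recurrence
  have hQalt : ∀ m : ℕ, Q ((m:ℤ)+1+1) = Q (m:ℤ) + 2 * a ((m:ℤ)+1) * P ((m:ℤ)+1) - a ((m:ℤ)+1)^2 * Q ((m:ℤ)+1) := by
    intro m
    have h1 := hQn (m+1); rw [hc1 m] at h1
    have h2 := hPn (m+1); rw [hc1 m] at h2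
    have h3 := hQn m
    have hQ1 : Q ((m:ℤ)+1) ≠ 0 := by have := hQne (m+1); rwa [hc1 m] at this
    apply mul_right_cancel₀ hQ1
    rw [h1, h2]
    linear_combination -h3
  -- convergent identities
  have I12 : ∀ m : ℕ,
      ((conv a m).1.2^2 - (N:ℤ) * (conv a m).2.2^2 = (-1:ℤ)^m * Q (m:ℤ)) ∧
      ((conv a m).1.1^2 - (N:ℤ) * (conv a m).2.1^2 = (-1:ℤ)^(m+1) * Q ((m:ℤ)+1)) ∧
      ((conv a m).1.1 * (conv a m).1.2 - (N:ℤ) * (conv a m).2.1 * (conv a m).2.2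
        = (-1:ℤ)^m * P ((m:ℤ)+1)) := by
    intro m
    induction m with
    | zero =>
      have p1 := hPn 0
      have q1 := hQn 0
      rw [Nat.cast_zero] at p1 q1
      rw [hP0] at p1
      rw [hQ0] at p1 q1
      refine ⟨?_, ?_, ?_⟩
      · simp [conv, hQ0]
      · simp only [conv, Nat.cast_zero]
        linear_combination q1 - (a 0 + P (0+1)) * p1
      · simp only [conv, Nat.cast_zero]
        linear_combination -p1
    | succ n ih =>
      obtain ⟨ih0, ih1, ih2⟩ := ih
      have hQa := hQalt n
      have p2 := hPn (n+1); rw [hc1 n] at p2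
      refine ⟨?_, ?_, ?_⟩
      · simp only [conv]
        rw [hc1 n]
        exact ih1
      · simp only [conv]
        rw [hc1 n]
        linear_combination (a ((n:ℤ)+1))^2 * ih1 + (2 * a ((n:ℤ)+1)) * ih2 + ih0 + (-1:ℤ)^(n+1) * hQa
      · simp only [conv]
        rw [hc1 n]
        linear_combination (a ((n:ℤ)+1)) * ih1 + ih2 + (-1:ℤ)^n * p2

  -- irrationality of y
  have hyirr : ∀ m : ℕ, Irrational (y m) := by
    intro m; rw [hy]
    have : ((P m : ℝ) - s) = ((P m : ℝ) + (-s)) := by ring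
    rw [this]
    exact (hirr.neg.intCast_add (P m)).div_intCast (hQne m)
  -- helper: C*v + D ≠ 0 for irrational v, C ≥ 1
  have hratne : ∀ (C D : ℤ) (v : ℝ), Irrational v → 1 ≤ C → (C:ℝ) * v + (D:ℝ) ≠ 0 := by
    intro C D v hv hC h
    apply hv
    have hC0 : (C:ℝ) ≠ 0 := by
      have : (0:ℝ) < (C:ℝ) := by exact_mod_cast (by linarith : (0:ℤ) < C)
      linarith
    refine ⟨(-D : ℚ)/(C:ℚ), ?_⟩
    push_cast
    rw [div_eq_iff (by exact_mod_cast hC0)]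
    linarith [h]
  have hratne' : ∀ (C A : ℤ) (v : ℝ), Irrational v → 1 ≤ C → (C:ℝ) * v - (A:ℝ) ≠ 0 := by
    intro C A v hv hC h
    have := hratne C (-A) v hv hC
    push_cast at this
    exact this (by linarith [h])
  -- nonnegativity of word matrix entries
  have wpos : ∀ l i : ℕ, 1 ≤ (wmat a l i).1.1 ∧ 0 ≤ (wmat a l i).1.2 ∧
      0 ≤ (wmat a l i).2.1 ∧ 0 ≤ (wmat a l i).2.2 := by
    intro l
    induction l with
    | zero => intro i; simp [wmat]
    | succ n ih =>
      intro i
      obtain ⟨h1, h2, h3, h4⟩ := ih (i+1)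
      have ha' := ha1 i
      simp only [wmat]
      refine ⟨by nlinarith, by nlinarith, by linarith, h2⟩
  have wC1 : ∀ l i : ℕ, 1 ≤ (wmat a (l+1) i).2.1 := by
    intro l i
    simp only [wmat]
    exact (wpos l (i+1)).1
  -- transfer relation for x
  have Tx : ∀ l i : ℕ, x i * (((wmat a l i).2.1 : ℝ) * x (i+l) + ((wmat a l i).2.2 : ℝ))
      = ((wmat a l i).1.1 : ℝ) * x (i+l) + ((wmat a l i).1.2 : ℝ) := by
    intro l
    induction l with
    | zero => intro i; simp [wmat]
    | succ n ih =>
      intro i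
      have IH := ih (i+1)
      rw [show i+1+n = i+(n+1) from by ring] at IH
      have hxne : x (i+1) ≠ 0 := ne_of_gt (hxpos (i+1))
      have e1 : x (i+1) * x i = (a i : ℝ) * x (i+1) + 1 := by
        linear_combination hxrec i
      apply mul_left_cancel₀ hxne
      simp only [wmat]
      push_cast
      linear_combination (((wmat a n (i+1)).1.1 : ℝ) * x (i+(n+1)) + ((wmat a n (i+1)).1.2 : ℝ)) * e1 - IH
  -- transfer relation for y
  have Ty : ∀ l i : ℕ, y i * (((wmat a l i).2.1 : ℝ) * y (i+l) + ((wmat a l i).2.2 : ℝ))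
      = ((wmat a l i).1.1 : ℝ) * y (i+l) + ((wmat a l i).1.2 : ℝ) := by
    intro l
    induction l with
    | zero => intro i; simp [wmat]
    | succ n ih =>
      intro i
      have IH := ih (i+1)
      rw [show i+1+n = i+(n+1) from by ring] at IH
      have hyne : y (i+1) ≠ 0 := ne_of_lt (hyneg (i+1))
      have e1 : y (i+1) * y i = (a i : ℝ) * y (i+1) + 1 := by
        linear_combination hyrec i
      apply mul_left_cancel₀ hyne
      simp only [wmat]
      push_cast
      linear_combination (((wmat a n (i+1)).1.1 : ℝ) * y (i+(n+1)) + ((wmat a n (i+1)).1.2 : ℝ)) * e1 - IH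
  -- word periodicity
  have wshift : ∀ l i : ℕ, 1 ≤ i → wmat a l (i + τ) = wmat a l i := by
    intro l
    induction l with
    | zero => intro i _; rfl
    | succ n ih =>
      intro i hi
      have hsh : a ((i + τ : ℕ) : ℤ) = a (i : ℤ) := by
        have := hper i (by exact_mod_cast hi)
        push_cast
        exact this
      simp only [wmat]
      rw [show i + τ + 1 = (i+1) + τ from by ring, ih (i+1) (by omega), hsh]
  have wconst : ∀ k : ℕ, wmat a τ (1 + k*τ) = wmat a τ 1 := by
    intro k
    induction k with
    | zero => norm_num
    | succ n ih =>
      rw [show 1+(n+1)*τ = (1+n*τ)+τ from by ring, wshift τ (1+n*τ) (by omega), ih]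
  -- C entry of the period word matrix
  obtain ⟨τ', hτ'⟩ : ∃ t, τ = t + 1 := ⟨τ - 1, by omega⟩
  have hCW : 1 ≤ (wmat a τ 1).2.1 := by rw [hτ']; exact wC1 τ' 1
  -- pigeonhole
  obtain ⟨i, j, hij, hPij, hQij⟩ : ∃ i j : ℕ, i < j ∧
      P ((1+i*τ : ℕ)) = P ((1+j*τ : ℕ)) ∧ Q ((1+i*τ:ℕ)) = Q ((1+j*τ:ℕ)) := by
    have hmem : ∀ k : ℕ, (P ((1+k*τ:ℕ)), Q ((1+k*τ:ℕ)))
        ∈ Finset.Icc (-(N:ℤ)) (N:ℤ) ×ˢ Finset.Icc (1:ℤ) (N:ℤ) := by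
      intro k
      simp only [Finset.mem_product, Finset.mem_Icc]
      refine ⟨⟨(hPbd _).1, (hPbd _).2⟩, ⟨?_, hQleN _⟩⟩
      have := hQposZ (1+k*τ); omega
    obtain ⟨i, j, hne, heq⟩ := Finite.exists_ne_map_eq_of_infinite
      (fun k : ℕ => (⟨(P ((1+k*τ:ℕ)), Q ((1+k*τ:ℕ))), hmem k⟩ :
        {z // z ∈ Finset.Icc (-(N:ℤ)) (N:ℤ) ×ˢ Finset.Icc (1:ℤ) (N:ℤ)}))
    have heq2 : (P ((1+i*τ:ℕ)), Q ((1+i*τ:ℕ))) = (P ((1+j*τ:ℕ)), Q ((1+j*τ:ℕ))) :=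
      congrArg Subtype.val heq
    rw [Prod.mk.injEq] at heq2
    rcases hne.lt_or_gt with h | h
    · exact ⟨i, j, h, heq2.1, heq2.2⟩
    · exact ⟨j, i, h, heq2.1.symm, heq2.2.symm⟩
  obtain ⟨d, hjd, hd1⟩ : ∃ d : ℕ, j = i + d ∧ 1 ≤ d := ⟨j - i, by omega, by omega⟩
  subst hjd
  -- the sampled relation
  have relx : ∀ k : ℕ, x (1+k*τ) * (((wmat a τ 1).2.1 : ℝ) * x (1+(k+1)*τ) + ((wmat a τ 1).2.2 : ℝ))
      = ((wmat a τ 1).1.1 : ℝ) * x (1+(k+1)*τ) + ((wmat a τ 1).1.2 : ℝ) := by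
    intro k
    have t := Tx τ (1+k*τ)
    rw [wconst k, show 1+k*τ+τ = 1+(k+1)*τ from by ring] at t
    exact t
  have rely : ∀ k : ℕ, y (1+k*τ) * (((wmat a τ 1).2.1 : ℝ) * y (1+(k+1)*τ) + ((wmat a τ 1).2.2 : ℝ))
      = ((wmat a τ 1).1.1 : ℝ) * y (1+(k+1)*τ) + ((wmat a τ 1).1.2 : ℝ) := by
    intro k
    have t := Ty τ (1+k*τ)
    rw [wconst k, show 1+k*τ+τ = 1+(k+1)*τ from by ring] at t
    exact t
  -- Rel k
  have hRel_i : x (1+i*τ) = x (1+(i+d)*τ) ∧ y (1+i*τ) = y (1+(i+d)*τ) := by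
    constructor
    · rw [hx, hx, hPij, hQij]
    · rw [hy, hy, hPij, hQij]
  have down : ∀ k : ℕ, (x (1+(k+1)*τ) = x (1+(k+1+d)*τ) ∧ y (1+(k+1)*τ) = y (1+(k+1+d)*τ)) →
      (x (1+k*τ) = x (1+(k+d)*τ) ∧ y (1+k*τ) = y (1+(k+d)*τ)) := by
    intro k hk
    have t1 := relx k
    have t2 := relx (k+d)
    rw [show k+d+1 = k+1+d from by ring, ← hk.1] at t2
    have s1 := rely k
    have s2 := rely (k+d)
    rw [show k+d+1 = k+1+d from by ring, ← hk.2] at s2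
    constructor
    · have hden : ((wmat a τ 1).2.1 : ℝ) * x (1+(k+1)*τ) + ((wmat a τ 1).2.2 : ℝ) ≠ 0 :=
        hratne _ _ _ (hxirr _) hCW
      have hz : (x (1+k*τ) - x (1+(k+d)*τ)) *
          (((wmat a τ 1).2.1 : ℝ) * x (1+(k+1)*τ) + ((wmat a τ 1).2.2 : ℝ)) = 0 := by
        linear_combination t1 - t2
      rcases mul_eq_zero.mp hz with h | h
      · linarith [sub_eq_zero.mp h]
      · exact absurd h hden
    · have hden : ((wmat a τ 1).2.1 : ℝ) * y (1+(k+1)*τ) + ((wmat a τ 1).2.2 : ℝ) ≠ 0 :=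
        hratne _ _ _ (hyirr _) hCW
      have hz : (y (1+k*τ) - y (1+(k+d)*τ)) *
          (((wmat a τ 1).2.1 : ℝ) * y (1+(k+1)*τ) + ((wmat a τ 1).2.2 : ℝ)) = 0 := by
        linear_combination s1 - s2
      rcases mul_eq_zero.mp hz with h | h
      · linarith [sub_eq_zero.mp h]
      · exact absurd h hden
  have up : ∀ k : ℕ, (x (1+k*τ) = x (1+(k+d)*τ) ∧ y (1+k*τ) = y (1+(k+d)*τ)) →
      (x (1+(k+1)*τ) = x (1+(k+1+d)*τ) ∧ y (1+(k+1)*τ) = y (1+(k+1+d)*τ)) := by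
    intro k hk
    have t1 := relx k
    have t2 := relx (k+d)
    rw [show k+d+1 = k+1+d from by ring, ← hk.1] at t2
    have s1 := rely k
    have s2 := rely (k+d)
    rw [show k+d+1 = k+1+d from by ring, ← hk.2] at s2
    constructor
    · have hfac : ((wmat a τ 1).2.1 : ℝ) * x (1+k*τ) - ((wmat a τ 1).1.1 : ℝ) ≠ 0 :=
        hratne' _ _ _ (hxirr _) hCW
      have hz : (x (1+(k+1)*τ) - x (1+(k+1+d)*τ)) *
          (((wmat a τ 1).2.1 : ℝ) * x (1+k*τ) - ((wmat a τ 1).1.1 : ℝ)) = 0 := by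
        linear_combination t1 - t2
      rcases mul_eq_zero.mp hz with h | h
      · linarith [sub_eq_zero.mp h]
      · exact absurd h hfac
    · have hfac : ((wmat a τ 1).2.1 : ℝ) * y (1+k*τ) - ((wmat a τ 1).1.1 : ℝ) ≠ 0 :=
        hratne' _ _ _ (hyirr _) hCW
      have hz : (y (1+(k+1)*τ) - y (1+(k+1+d)*τ)) *
          (((wmat a τ 1).2.1 : ℝ) * y (1+k*τ) - ((wmat a τ 1).1.1 : ℝ)) = 0 := by
        linear_combination s1 - s2
      rcases mul_eq_zero.mp hz with h | h
      · linarith [sub_eq_zero.mp h]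
      · exact absurd h hfac
  have hdesc : ∀ t : ℕ, (x (1+t*τ) = x (1+(t+d)*τ) ∧ y (1+t*τ) = y (1+(t+d)*τ)) →
      (x (1+0*τ) = x (1+(0+d)*τ) ∧ y (1+0*τ) = y (1+(0+d)*τ)) := by
    intro t
    induction t with
    | zero => exact id
    | succ n ih => exact fun h => ih (down n h)
  have hRel0 := hdesc i hRel_i
  have hRel1 := up 0 hRel0
  -- quadratic argument
  obtain ⟨e, he⟩ : ∃ e, d * τ = e + 1 := ⟨d*τ - 1, by
    have : 1 ≤ d * τ := Nat.mul_le_mul hd1 hτ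
    omega⟩
  have hCV : 1 ≤ (wmat a (d*τ) 1).2.1 := by rw [he]; exact wC1 e 1
  have tV := Tx (d*τ) 1
  have tVy := Ty (d*τ) 1
  have tV2 := Tx (d*τ) (1+τ)
  rw [wshift (d*τ) 1 le_rfl] at tV2
  have hx1d : x (1+d*τ) = x 1 := by
    have := hRel0.1
    rw [show 1+0*τ = 1 from by ring, show (0+d) = d from by ring] at this
    exact this.symm
  have hy1d : y (1+d*τ) = y 1 := by
    have := hRel0.2
    rw [show 1+0*τ = 1 from by ring, show (0+d) = d from by ring] at this
    exact this.symm
  have hx1td : x (1+τ+d*τ) = x (1+τ) := by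
    have := hRel1.1
    rw [show 1+1*τ = 1+τ from by ring, show 1+(1+d)*τ = 1+τ+d*τ from by ring] at this
    exact this.symm
  rw [hx1d] at tV
  rw [hy1d] at tVy
  rw [hx1td] at tV2
  -- now tV, tVy, tV2 say that x 1, y 1, x (1+τ) are roots of the same quadratic
  have hxy1 : x 1 ≠ y 1 := by
    intro h
    have h1 := hx1 0
    have h2 := hyneg 1
    rw [← h] at h2
    linarith
  have hzy1 : x (1+τ) ≠ y 1 := by
    intro h
    have h1 : 1 < x (1+τ) := by
      rw [show 1+τ = τ+1 from by ring]
      exact hx1 τ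
    have h2 := hyneg 1
    rw [← h] at h2
    linarith
  have E1 : ((wmat a (d*τ) 1).2.1 : ℝ) * (x 1 + y 1) + ((wmat a (d*τ) 1).2.2 : ℝ)
      - ((wmat a (d*τ) 1).1.1 : ℝ) = 0 := by
    have hz : (x 1 - y 1) * (((wmat a (d*τ) 1).2.1 : ℝ) * (x 1 + y 1)
        + ((wmat a (d*τ) 1).2.2 : ℝ) - ((wmat a (d*τ) 1).1.1 : ℝ)) = 0 := by
      linear_combination tV - tVy
    rcases mul_eq_zero.mp hz with h | h
    · exact absurd (sub_eq_zero.mp h) hxy1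
    · exact h
  have E2 : ((wmat a (d*τ) 1).2.1 : ℝ) * (x (1+τ) + y 1) + ((wmat a (d*τ) 1).2.2 : ℝ)
      - ((wmat a (d*τ) 1).1.1 : ℝ) = 0 := by
    have hz : (x (1+τ) - y 1) * (((wmat a (d*τ) 1).2.1 : ℝ) * (x (1+τ) + y 1)
        + ((wmat a (d*τ) 1).2.2 : ℝ) - ((wmat a (d*τ) 1).1.1 : ℝ)) = 0 := by
      linear_combination tV2 - tVy
    rcases mul_eq_zero.mp hz with h | h
    · exact absurd (sub_eq_zero.mp h) hzy1
    · exact h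
  have hxper1 : x (1+τ) = x 1 := by
    have hC0 : (0:ℝ) < ((wmat a (d*τ) 1).2.1 : ℝ) := by
      exact_mod_cast (by linarith : (0:ℤ) < (wmat a (d*τ) 1).2.1)
    have := sub_eq_zero.mp (by linarith [E1, E2] :
      ((wmat a (d*τ) 1).2.1 : ℝ) * (x (1+τ)) - ((wmat a (d*τ) 1).2.1 : ℝ) * (x 1) = 0)
    have h2 : ((wmat a (d*τ) 1).2.1 : ℝ) * (x (1+τ) - x 1) = 0 := by linarith [this]
    rcases mul_eq_zero.mp h2 with h | h
    · linarith
    · linarith [sub_eq_zero.mp h]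

  -- extraction: x m determines P m, Q m
  have hext : ∀ (m : ℕ) (p q : ℤ), q ≠ 0 → x m = ((p:ℝ) + s)/(q:ℝ) → P m = p ∧ Q m = q := by
    intro m p q hq hxe
    rw [hx] at hxe
    have hqR : (q:ℝ) ≠ 0 := Int.cast_ne_zero.mpr hq
    rw [div_eq_div_iff (hQR m) hqR] at hxe
    have hQeq : Q m = q := by
      by_contra hne
      apply hirr
      have hne' : ((q:ℝ) - (Q m : ℝ)) ≠ 0 := by
        rw [sub_ne_zero]
        intro h
        exact hne (by exact_mod_cast h.symm)
      refine ⟨((p * Q m - P m * q : ℤ) : ℚ) / ((q - Q m : ℤ) : ℚ), ?_⟩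
      push_cast
      rw [div_eq_iff hne']
      linear_combination -hxe
    refine ⟨?_, hQeq⟩
    rw [hQeq] at hxe
    have h0 : ((P m : ℝ) - (p:ℝ)) * (q:ℝ) = 0 := by linear_combination hxe
    rcases mul_eq_zero.mp h0 with h | h
    · exact_mod_cast sub_eq_zero.mp h
    · exact absurd h hqR
  -- full periodicity of x
  have hxperA : ∀ t : ℕ, x (1+t+τ) = x (1+t) := by
    intro t
    induction t with
    | zero => exact hxper1
    | succ n ih =>
      have r1 := hxrec (1+n+τ)
      rw [show 1+n+τ+1 = 1+(n+1)+τ from by ring] at r1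
      have r2 := hxrec (1+n)
      rw [show 1+n+1 = 1+(n+1) from by ring] at r2
      have hae : a ((1+n+τ : ℕ):ℤ) = a ((1+n : ℕ):ℤ) := by
        have h := hper ((1+n : ℕ):ℤ) (by push_cast; omega)
        push_cast at h ⊢
        convert h using 2
      rw [ih, hae] at r1
      exact mul_right_cancel₀ (ne_of_gt (hfr (1+n)).1) (r1.trans r2.symm)
  have hPQper : ∀ m : ℕ, 1 ≤ m → P ((m+τ : ℕ)) = P m ∧ Q ((m+τ:ℕ)) = Q m := by
    intro m hm
    obtain ⟨t, rfl⟩ : ∃ t, m = 1 + t := ⟨m - 1, by omega⟩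
    exact hext (1+t+τ) _ _ (hQne (1+t)) (by rw [hxperA t, hx])
  -- Q τ = 1 and P τ = a 0
  have hQtau : Q (τ:ℤ) = 1 ∧ P (τ:ℤ) = a 0 := by
    have h1 : x (τ+1) = x 1 := by
      have h := hxperA 0
      rw [show 1+0+τ = τ+1 from by ring] at h
      exact h
    have r1 := hxrec τ
    have r2 := hxrec 0
    rw [h1] at r1
    have h2 : x τ - (a ((τ:ℕ):ℤ) : ℝ) = x 0 - (a ((0:ℕ):ℤ) : ℝ) :=
      mul_left_cancel₀ (ne_of_gt (hxpos 1)) (r1.trans r2.symm)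
    rw [hx0, Nat.cast_zero] at h2
    have h5 := hext τ (a (τ:ℤ) - a 0) 1 one_ne_zero (by push_cast; rw [div_one]; linarith [h2])
    have hyt : y τ = ((a (τ:ℤ) - a 0 : ℤ):ℝ) - s := by
      rw [hy, h5.1, h5.2]
      push_cast
      rw [div_one]
    have hy1 : y τ < 0 := hyneg τ
    have hy2 : -1 < y τ := by rw [hτ']; exact hyred τ'
    rw [hyt] at hy1 hy2
    push_cast at hy1 hy2
    have ha0 : a 0 = a (τ:ℤ) - a 0 := by
      have hf : a ((0:ℕ):ℤ) = ⌊x 0⌋ := hfl 0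
      rw [hx0, Nat.cast_zero] at hf
      have hfc : ⌊s⌋ = a (τ:ℤ) - a 0 :=
        Int.floor_eq_iff.mpr ⟨by push_cast; linarith, by push_cast; linarith⟩
      exact hf.trans hfc
    exact ⟨h5.2, by rw [h5.1, ← ha0]⟩

  -- symmetry of the period
  have SYM : ∀ m : ℕ, m + 1 ≤ τ →
      ((1 ≤ m → P ((τ+1-m : ℕ)) = P ((m:ℕ))) ∧ Q ((τ-m : ℕ)) = Q ((m:ℕ))) ∧
      (P ((τ+1-(m+1) : ℕ)) = P ((m+1:ℕ)) ∧ Q ((τ-(m+1) : ℕ)) = Q ((m+1:ℕ))) := by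
    intro m
    induction m with
    | zero =>
      intro h1
      have hP1 : P ((1:ℕ):ℤ) = a 0 := by
        have := hPn 0
        rw [Nat.cast_zero, hP0, hQ0] at this
        rw [show ((1:ℕ):ℤ) = (0:ℤ)+1 from by norm_num, this]
        ring
      have hPtau : P ((τ+1-1 : ℕ)) = P ((1:ℕ)) := by
        rw [show τ+1-1 = τ from by omega, hQtau.2, hP1]
      constructor
      · refine ⟨fun h => absurd h (by omega), ?_⟩
        rw [show τ-0 = τ from by omega, Nat.cast_zero, hQ0, hQtau.1]
      · refine ⟨hPtau, ?_⟩
        -- Q (τ-1) = Q 1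
        have e1 := hQn (τ-1)
        rw [show ((τ-1:ℕ):ℤ)+1 = (τ:ℤ) from by push_cast [Nat.cast_sub hτ]; ring] at e1
        rw [hQtau.1, hQtau.2, one_mul] at e1
        have e2 := hQn 0
        rw [Nat.cast_zero, hQ0, mul_one] at e2
        have e3 : P ((0:ℤ)+1) = a 0 := by
          have h := hPn 0
          rw [Nat.cast_zero, hP0, hQ0] at h
          rw [h]; ring
        rw [e3] at e2
        rw [show τ-(0+1) = τ-1 from by omega, e1,
          show ((0+1:ℕ):ℤ) = (0:ℤ)+1 from by norm_num, e2]
      | succ n ih =>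
        intro hn2
        obtain ⟨hSn, hSn1⟩ := ih (by omega)
        refine ⟨⟨fun _ => hSn1.1, hSn1.2⟩, ?_⟩
        -- j = τ - (n+1) ≥ 1
        obtain ⟨j, hj, hj1⟩ : ∃ j : ℕ, τ = j + (n+1) ∧ 1 ≤ j := ⟨τ-(n+1), by omega, by omega⟩
        obtain ⟨j', rfl⟩ : ∃ j', j = j' + 1 := ⟨j-1, by omega⟩
        -- available facts with indices in terms of j
        have hPj1 : P ((j'+1+1 : ℕ)) = P ((n+1:ℕ)) := by
          rw [show j'+1+1 = τ+1-(n+1) from by omega]; exact hSn1.1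
        have hQj1 : Q ((j'+1+1 : ℕ)) = Q ((n:ℕ)) := by
          rw [show j'+1+1 = τ-n from by omega]; exact hSn.2
        have hQj : Q ((j'+1 : ℕ)) = Q ((n+1:ℕ)) := by
          rw [show j'+1 = τ-(n+1) from by omega]; exact hSn1.2
        -- key : x (n+1) * y (j+1) = -1
        have hkey : x (n+1) * y (j'+1+1) = -1 := by
          rw [hx, hy, hPj1, hQj1]
          rw [show ((n+1:ℕ):ℤ) = (n:ℤ)+1 from by push_cast; ring]
          rw [div_mul_div_comm]
          have e2 : ((P ((n:ℤ)+1) : ℝ) + s) * ((P ((n:ℤ)+1) : ℝ) - s)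
              = -((((N:ℤ) - P ((n:ℤ)+1)^2 : ℤ)) : ℝ) := by
            push_cast
            linear_combination -hs2
          have e3 : ((Q ((n:ℤ)+1) : ℝ)) * (Q (n:ℤ) : ℝ) = (((N:ℤ) - P ((n:ℤ)+1)^2 : ℤ) : ℝ) := by
            rw [← hQn n]; push_cast; ring
          rw [e2, e3, neg_div]
          rw [div_self (Int.cast_ne_zero.mpr (hNP n))]
        -- hence x (n+1) = a j - y j
        have hyj1ne : y (j'+1+1) ≠ 0 := ne_of_lt (hyneg _)
        have hrecj := hyrec (j'+1)
        have hxm : x (n+1) = ((a ((j'+1:ℕ):ℤ)) : ℝ) - y (j'+1) := by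
          linear_combination (-(x (n+1))) * hrecj + (y (j'+1) - ((a ((j'+1:ℕ):ℤ)) : ℝ)) * hkey
        -- digit symmetry
        have hadig : a ((j'+1:ℕ):ℤ) = a ((n+1:ℕ):ℤ) := by
          have hy1 : y (j'+1) < 0 := hyneg _
          have hy2 : -1 < y (j'+1) := hyred j'
          have hfn := hfl (n+1)
          have : ⌊x (n+1)⌋ = a ((j'+1:ℕ):ℤ) := by
            rw [Int.floor_eq_iff]
            constructor
            · rw [hxm]; linarith
            · rw [hxm]; linarith
          rw [hfn, this]
        -- P part
        have hPstep : P ((j'+1 : ℕ)) = P ((n+1+1 : ℕ)) := by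
          have e1 := hPn (j'+1)
          rw [show ((j'+1:ℕ):ℤ)+1 = ((j'+1+1:ℕ):ℤ) from by push_cast; ring] at e1
          have e4 := hPn (n+1)
          rw [show ((n+1:ℕ):ℤ)+1 = ((n+1+1:ℕ):ℤ) from by push_cast; ring] at e4
          rw [hPj1, hadig, hQj] at e1
          linarith [e1, e4]
        -- Q part
        have hQstep : Q ((j' : ℕ)) = Q ((n+1+1 : ℕ)) := by
          have e1 := hQn j'
          rw [show ((j':ℕ):ℤ)+1 = ((j'+1:ℕ):ℤ) from by push_cast; ring] at e1
          have e4 := hQn (n+1)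
          rw [show ((n+1:ℕ):ℤ)+1 = ((n+1+1:ℕ):ℤ) from by push_cast; ring] at e4
          rw [hPstep, hQj] at e1
          -- e1 : Q (n+1) * Q j' = N - P(n+2)^2 ; e4 : Q (n+2) * Q (n+1) = N - P (n+2)^2
          have hQne' : Q ((n+1:ℕ)) ≠ 0 := hQne (n+1)
          apply mul_left_cancel₀ hQne'
          rw [e1]
          linarith [e4]
        refine ⟨?_, ?_⟩
        · rw [show τ+1-(n+1+1) = j'+1 from by omega]
          exact hPstep
        · rw [show τ-(n+1+1) = j' from by omega]
          exact hQstep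

  -- final assembly
  obtain ⟨r, q, hrp, hqp, hr8, hq4, hrq⟩ := hdvd
  have hrN : r ∣ N := dvd_trans (Dvd.intro q rfl) hrq
  have hqN : q ∣ N := dvd_trans (Dvd.intro_left r rfl) hrq
  haveI : Fact (Nat.Prime q) := ⟨hqp⟩
  haveI : Fact (Nat.Prime r) := ⟨hrp⟩
  have hEven : Even τ := by
    by_contra hodd
    rw [Nat.not_even_iff_odd] at hodd
    have E := (I12 τ').2.1
    rw [show ((τ':ℕ):ℤ)+1 = ((τ:ℕ):ℤ) from by rw [hτ']; push_cast; ring] at E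
    rw [hQtau.1, mul_one] at E
    rw [show τ'+1 = τ from hτ'.symm] at E
    rw [hodd.neg_one_pow] at E
    have hsq : IsSquare (-1 : ZMod q) := by
      refine ⟨((conv a τ').1.1 : ZMod q), ?_⟩
      have hN0 : ((N:ℕ) : ZMod q) = 0 := (ZMod.natCast_eq_zero_iff N q).mpr hqN
      have hc := congrArg (fun z : ℤ => (z : ZMod q)) E
      push_cast at hc
      rw [hN0] at hc
      linear_combination -hc
    rw [ZMod.exists_sq_eq_neg_one_iff] at hsq
    exact hsq (by omega)
  obtain ⟨k, hk⟩ := hEven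
  have hk1 : 1 ≤ k := by omega
  have hdiv2 : τ / 2 = k := by omega
  rw [hdiv2]
  have hS := (SYM (k-1) (by omega)).2
  rw [show k-1+1 = k from by omega, show τ+1-k = k+1 from by omega,
    show τ-k = k from by omega] at hS
  have hPk : P ((k+1:ℕ)) = P ((k:ℕ)) := hS.1
  have h2P : a (k:ℤ) * Q (k:ℤ) = 2 * P (k:ℤ) := by
    have h := hPn k
    rw [show ((k:ℕ):ℤ)+1 = ((k+1:ℕ):ℤ) from by push_cast; ring, hPk] at h
    linarith
  have hQQ : Q ((k+1:ℕ)) * Q (k:ℤ) = (N:ℤ) - P (k:ℤ)^2 := by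
    have h := hQn k
    rw [show ((k:ℕ):ℤ)+1 = ((k+1:ℕ):ℤ) from by push_cast; ring, hPk] at h
    exact h
  have hEaQ : Even (a (k:ℤ) * Q (k:ℤ)) := ⟨P (k:ℤ), by linarith [h2P]⟩
  have hdvd2 : Q (k:ℤ) ∣ 2 * (N:ℤ) := by
    rcases Int.even_mul.mp hEaQ with he | he
    · obtain ⟨b, hb⟩ := he
      have h2 : 2 * (b * Q (k:ℤ)) = 2 * P (k:ℤ) := by
        rw [hb] at h2P
        linear_combination h2P
      have hPb : P (k:ℤ) = b * Q (k:ℤ) := by linarith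
      exact ⟨2 * (b^2 * Q (k:ℤ) + Q ((k+1:ℕ))),
        by linear_combination (-2)*hQQ + (2*(P (k:ℤ) + b*Q (k:ℤ)))*hPb⟩
    · obtain ⟨R, hR⟩ := he
      have h2 : 2 * (a (k:ℤ) * R) = 2 * P (k:ℤ) := by
        rw [hR] at h2P
        linear_combination h2P
      have hPa : P (k:ℤ) = a (k:ℤ) * R := by linarith
      exact ⟨a (k:ℤ)^2 * R + 2 * Q ((k+1:ℕ)),
        by linear_combination (-2)*hQQ + (-(a (k:ℤ))^2*R)*hR + (2*(P (k:ℤ) + a (k:ℤ)*R))*hPa⟩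
  have hne2 : Q (k:ℤ) ≠ 2 := by
    intro hQ2
    obtain ⟨k', rfl⟩ : ∃ k', k = k' + 1 := ⟨k-1, by omega⟩
    have E := (I12 k').2.1
    rw [show ((k':ℕ):ℤ)+1 = ((k'+1:ℕ):ℤ) from by push_cast; ring, hQ2] at E
    have hr2 : r ≠ 2 := by omega
    have hN0 : ((N:ℕ) : ZMod r) = 0 := (ZMod.natCast_eq_zero_iff N r).mpr hrN
    rcases Nat.even_or_odd (k'+1) with he | ho
    · rw [he.neg_one_pow, one_mul] at E
      have hsq : IsSquare (2 : ZMod r) := by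
        refine ⟨((conv a k').1.1 : ZMod r), ?_⟩
        have hc := congrArg (fun z : ℤ => (z : ZMod r)) E
        push_cast at hc
        rw [hN0] at hc
        linear_combination -hc
      rw [ZMod.exists_sq_eq_two_iff hr2] at hsq
      omega
    · rw [ho.neg_one_pow] at E
      have hsq : IsSquare (-2 : ZMod r) := by
        refine ⟨((conv a k').1.1 : ZMod r), ?_⟩
        have hc := congrArg (fun z : ℤ => (z : ZMod r)) E
        push_cast at hc
        rw [hN0] at hc
        linear_combination -hc
      rw [ZMod.exists_sq_eq_neg_two_iff hr2] at hsq
      omega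
  exact ⟨⟨k, hk⟩, hne2, hdvd2⟩
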